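/- Let α₁, α₂, α₃ ∈ ℂ with |α₁|² + |α₂|² + |α₃|² = 1 and let ψ = α₁·|100⟩ + α₂·|010⟩ + α₃·|001⟩. Then both the CKW monogamy inequality and its dual hold with equality: C(ρ_AB)² + C(ρ_AS)² = 4·det ρ_A = C_a(ρ_AB)² + C_a(ρ_AS)², where in fact C(ρ_AB) = C_a(ρ_AB) = 2|α₁|·|α₂|, C(ρ_AS) = C_a(ρ_AS) = 2|α₁|·|α₃|, and 4·det ρ_A = 4|α₁|²(|α₂|² + |α₃|²). -/

import Mathlib

open Matrix Complex Kronecker Finset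
open scoped ComplexOrder

noncomputable section

abbrev TwoQubitMat := Matrix (Fin 2 × Fin 2) (Fin 2 × Fin 2) ℂ

def sigmaY : Matrix (Fin 2) (Fin 2) ℂ := !![0, -Complex.I; Complex.I, 0]

def spinFlip (ρ : TwoQubitMat) : TwoQubitMat :=
  (sigmaY ⊗ₖ sigmaY) * ρ.map (starRingEnd ℂ) * (sigmaY ⊗ₖ sigmaY)

def matSqrt {m : Type*} [Fintype m] [DecidableEq m] (M : Matrix m m ℂ) : Matrix m m ℂ :=
  open scoped Classical in
  if h : M.PosSemidef then h.1.eigenvectorUnitary.1 *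
    diagonal ((RCLike.ofReal : ℝ → ℂ) ∘ Real.sqrt ∘ h.1.eigenvalues) *
    (star h.1.eigenvectorUnitary : Matrix m m ℂ) else 0

def Rmat (ρ : TwoQubitMat) : TwoQubitMat :=
  matSqrt (matSqrt ρ * spinFlip ρ * matSqrt ρ)

def CoA (ρ : TwoQubitMat) : ℝ := (Rmat ρ).trace.re

def lmin2 (M : Matrix (Fin 2) (Fin 2) ℂ) : ℝ :=
  if h : M.IsHermitian then min (h.eigenvalues 0) (h.eigenvalues 1) else 0

def maxEig4 (M : TwoQubitMat) : ℝ :=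
  if h : M.IsHermitian then Finset.univ.sup' Finset.univ_nonempty h.eigenvalues else 0

def Conc (ρ : TwoQubitMat) : ℝ := max 0 (2 * maxEig4 (Rmat ρ) - (Rmat ρ).trace.re)

def eigMultiset (M : TwoQubitMat) : Multiset ℝ :=
  if h : M.IsHermitian then Finset.univ.val.map h.eigenvalues else 0

def rhoAB (ψ : Fin 2 → Fin 2 → Fin 2 → ℂ) : TwoQubitMat :=
  fun p q => ∑ l, ψ p.1 p.2 l * (starRingEnd ℂ) (ψ q.1 q.2 l)

def rhoAS (ψ : Fin 2 → Fin 2 → Fin 2 → ℂ) : TwoQubitMat :=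
  fun p q => ∑ j, ψ p.1 j p.2 * (starRingEnd ℂ) (ψ q.1 j q.2)

def rhoA (ψ : Fin 2 → Fin 2 → Fin 2 → ℂ) : Matrix (Fin 2) (Fin 2) ℂ :=
  fun i i' => ∑ j, ∑ l, ψ i j l * (starRingEnd ℂ) (ψ i' j l)

/-- The state `α₁|100⟩ + α₂|010⟩ + α₃|001⟩`. -/
def psiW3 (α₁ α₂ α₃ : ℂ) : Fin 2 → Fin 2 → Fin 2 → ℂ := fun i j l =>
  if i = 1 ∧ j = 0 ∧ l = 0 then α₁
  else if i = 0 ∧ j = 1 ∧ l = 0 then α₂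
  else if i = 0 ∧ j = 0 ∧ l = 1 then α₃
  else 0

namespace CKWAux
set_option linter.unusedSectionVars false
open Matrix

variable {m : Type*} [Fintype m] [DecidableEq m]

lemma vmv_mul_vmv (a b c d : m → ℂ) :
    vecMulVec a b * vecMulVec c d = (b ⬝ᵥ c) • vecMulVec a d := by
  ext p q
  simp only [Matrix.mul_apply, vecMulVec_apply, Matrix.smul_apply, smul_eq_mul, dotProduct,
    Finset.sum_mul]
  exact Finset.sum_congr rfl fun r _ => by ring

lemma mul_vmv (A : Matrix m m ℂ) (x y : m → ℂ) :
    A * vecMulVec x y = vecMulVec (A *ᵥ x) y := by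
  ext p q
  simp only [Matrix.mul_apply, vecMulVec_apply, mulVec, dotProduct, Finset.sum_mul]
  exact Finset.sum_congr rfl fun r _ => by ring

lemma vmv_mul (x y : m → ℂ) (A : Matrix m m ℂ) :
    vecMulVec x y * A = vecMulVec x (y ᵥ* A) := by
  ext p q
  simp only [Matrix.mul_apply, vecMulVec_apply, vecMul, dotProduct, Finset.mul_sum]
  exact Finset.sum_congr rfl fun r _ => by ring

lemma map_vmv (x y : m → ℂ) :
    (vecMulVec x y).map (starRingEnd ℂ) = vecMulVec (star x) (star y) := by
  ext p q
  simp [vecMulVec_apply, Pi.star_apply]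

/-- outer product `x x†`. -/
def outer (x : m → ℂ) : Matrix m m ℂ := vecMulVec x (star x)

lemma outer_posSemidef (x : m → ℂ) : (outer x).PosSemidef := by
  rw [outer, vecMulVec_eq Unit, ← conjTranspose_replicateCol]
  exact posSemidef_self_mul_conjTranspose _

lemma outer_isHermitian (x : m → ℂ) : (outer x).IsHermitian := (outer_posSemidef x).1

lemma posSemidef_smul {M : Matrix m m ℂ} (hM : M.PosSemidef) {c : ℝ} (hc : 0 ≤ c) :
    (c • M).PosSemidef := by
  exact hM.smul hc

lemma real_smul_mat (r : ℝ) (M : Matrix m m ℂ) : ((r:ℂ)) • M = r • M := by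
  ext p q
  simp [Complex.real_smul]

open scoped MatrixOrder in
lemma matSqrt_eq {M S : Matrix m m ℂ} (hS : S.PosSemidef) (h2 : S * S = M) : matSqrt M = S := by
  have hM : M.PosSemidef := by
    rw [← h2]
    nth_rewrite 1 [← hS.1]
    exact posSemidef_conjTranspose_mul_self S
  rw [matSqrt, dif_pos hM]
  have hsq : CFC.sqrt M = S := CFC.sqrt_unique h2 hS.nonneg
  rw [← hsq, CFC.sqrt_eq_cfc, cfc_nnreal_eq_real _ M hM.nonneg, hM.1.cfc_eq]
  simp only [IsHermitian.cfc, Unitary.conjStarAlgAut_apply]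
  rw [show (fun x : ℝ => ((NNReal.sqrt x.toNNReal : NNReal) : ℝ)) = Real.sqrt from
    funext fun x => by rw [Real.sqrt]]

lemma sum_eigs (M : Matrix m m ℂ) [Nonempty m] (hM : M.IsHermitian) :
    ((∑ i, hM.eigenvalues i : ℝ) : ℂ) = M.trace := by
  rw [hM.trace_eq_sum_eigenvalues]
  push_cast
  rfl

end CKWAux
namespace CKWAux
open Matrix

lemma maxEig4_eq {R : TwoQubitMat} (hR : R.PosSemidef) (t : ℝ) (htr : R.trace.re = t)
    (hsq : R * R = t • R) : maxEig4 R = t := by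
  have h := hR.1
  have hsum : ∑ i, h.eigenvalues i = t := by
    have := sum_eigs R h
    rw [← htr, ← this]
    simp
  have ht0 : 0 ≤ t := by
    rw [← hsum]
    exact Finset.sum_nonneg fun i _ => hR.eigenvalues_nonneg i
  have heig : ∀ i, h.eigenvalues i = 0 ∨ h.eigenvalues i = t := by
    intro i
    have hv := h.mulVec_eigenvectorBasis i
    have hvne : (⇑(h.eigenvectorBasis i) : Fin 2 × Fin 2 → ℂ) ≠ 0 := by
      intro hc
      apply h.eigenvectorBasis.orthonormal.ne_zero i
      ext x
      exact congrFun hc x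
    have h2 : (R * R) *ᵥ ⇑(h.eigenvectorBasis i)
        = (h.eigenvalues i * h.eigenvalues i) • ⇑(h.eigenvectorBasis i) := by
      rw [← mulVec_mulVec, hv, mulVec_smul, hv, smul_smul]
    have h3 : (R * R) *ᵥ ⇑(h.eigenvectorBasis i)
        = (t * h.eigenvalues i) • ⇑(h.eigenvectorBasis i) := by
      rw [hsq, smul_mulVec, hv, smul_smul]
    have h4 : (h.eigenvalues i * h.eigenvalues i - t * h.eigenvalues i) • ⇑(h.eigenvectorBasis i) = 0 := by
      rw [sub_smul, ← h2, ← h3, sub_self]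
    rcases smul_eq_zero.mp h4 with h5 | h5
    · have h6 : h.eigenvalues i * (h.eigenvalues i - t) = 0 := by linarith [h5]
      rcases mul_eq_zero.mp h6 with h7 | h7
      · exact Or.inl h7
      · exact Or.inr (by linarith)
    · exact absurd h5 hvne
  rw [maxEig4, dif_pos h]
  apply le_antisymm
  · refine Finset.sup'_le _ _ fun i _ => ?_
    rcases heig i with h0 | h0 <;> rw [h0]
    exact ht0
  · by_cases hex : ∃ i, h.eigenvalues i = t
    · obtain ⟨i, hi⟩ := hex
      exact hi ▸ Finset.le_sup' _ (Finset.mem_univ i)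
    · have hall : ∀ i, h.eigenvalues i = 0 := fun i =>
        (heig i).resolve_right fun hh => hex ⟨i, hh⟩
      have ht : t = 0 := by
        rw [← hsum]
        simp [hall]
      rw [ht]
      have := Finset.le_sup' h.eigenvalues (Finset.mem_univ ((0 : Fin 2), (0 : Fin 2)))
      rwa [hall] at this

end CKWAux
namespace CKWAux
open Matrix

def wVec (a b : ℂ) : Fin 2 × Fin 2 → ℂ := fun p =>
  if p = (1, 0) then a else if p = (0, 1) then b else 0

def cVec (g : ℂ) : Fin 2 × Fin 2 → ℂ := fun p => if p = (0, 0) then g else 0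

def dVec (g : ℂ) : Fin 2 × Fin 2 → ℂ := fun p => if p = (1, 1) then g else 0

/-- the reduced density matrix of the W-class state. -/
def Wmat (a b g : ℂ) : TwoQubitMat := outer (wVec a b) + outer (cVec g)

lemma rhoAB_eq (a b g : ℂ) : rhoAB (psiW3 a b g) = Wmat a b g := by
  ext ⟨i, j⟩ ⟨k, l⟩
  fin_cases i <;> fin_cases j <;> fin_cases k <;> fin_cases l <;>
    simp [rhoAB, psiW3, Wmat, outer, wVec, cVec, vecMulVec_apply, Fin.sum_univ_succ,
      Prod.ext_iff, Matrix.add_apply]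

lemma rhoAS_eq (a b g : ℂ) : rhoAS (psiW3 a b g) = Wmat a g b := by
  ext ⟨i, j⟩ ⟨k, l⟩
  fin_cases i <;> fin_cases j <;> fin_cases k <;> fin_cases l <;>
    simp [rhoAS, psiW3, Wmat, outer, wVec, cVec, vecMulVec_apply, Fin.sum_univ_succ,
      Prod.ext_iff, Matrix.add_apply]

-- dot products
lemma dot_w_w (a b c d : ℂ) :
    star (wVec a b) ⬝ᵥ wVec c d = (starRingEnd ℂ) a * c + (starRingEnd ℂ) b * d := by
  simp [dotProduct, wVec, Fintype.sum_prod_type, Fin.sum_univ_succ, Prod.ext_iff]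
  ring

lemma dot_w_c (a b g : ℂ) : star (wVec a b) ⬝ᵥ cVec g = 0 := by
  simp [dotProduct, wVec, cVec, Fintype.sum_prod_type, Fin.sum_univ_succ, Prod.ext_iff]

lemma dot_c_w (a b g : ℂ) : star (cVec g) ⬝ᵥ wVec a b = 0 := by
  simp [dotProduct, wVec, cVec, Fintype.sum_prod_type, Fin.sum_univ_succ, Prod.ext_iff]

lemma dot_c_c (g g' : ℂ) : star (cVec g) ⬝ᵥ cVec g' = (starRingEnd ℂ) g * g' := by
  simp [dotProduct, cVec, Fintype.sum_prod_type, Fin.sum_univ_succ, Prod.ext_iff]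

lemma dot_w_d (a b g : ℂ) : star (wVec a b) ⬝ᵥ dVec g = 0 := by
  simp [dotProduct, wVec, dVec, Fintype.sum_prod_type, Fin.sum_univ_succ, Prod.ext_iff]

lemma dot_c_d (g g' : ℂ) : star (cVec g) ⬝ᵥ dVec g' = 0 := by
  simp [dotProduct, cVec, dVec, Fintype.sum_prod_type, Fin.sum_univ_succ, Prod.ext_iff]

lemma star_wVec (a b : ℂ) : star (wVec a b) = wVec ((starRingEnd ℂ) a) ((starRingEnd ℂ) b) := by
  ext p
  by_cases h1 : p = (1, 0) <;> by_cases h2 : p = (0, 1) <;>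
    simp [wVec, Pi.star_apply, h1, h2]

end CKWAux
namespace CKWAux
open Matrix

lemma star_cVec (g : ℂ) : star (cVec g) = cVec ((starRingEnd ℂ) g) := by
  ext p
  simp only [Pi.star_apply, cVec]
  split_ifs <;> simp

lemma star_dVec (g : ℂ) : star (dVec g) = dVec ((starRingEnd ℂ) g) := by
  ext p
  simp only [Pi.star_apply, dVec]
  split_ifs <;> simp

lemma dVec_neg (g : ℂ) : dVec (-g) = -dVec g := by
  ext p
  simp only [dVec, Pi.neg_apply]
  split_ifs <;> simp

lemma vmv_neg_neg (x y : Fin 2 × Fin 2 → ℂ) : vecMulVec (-x) (-y) = vecMulVec x y := by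
  ext p q
  simp [vecMulVec_apply]

lemma A_mulVec_w (a b : ℂ) : (sigmaY ⊗ₖ sigmaY) *ᵥ wVec a b = wVec b a := by
  ext ⟨i, j⟩
  fin_cases i <;> fin_cases j <;>
    simp [mulVec, dotProduct, wVec, sigmaY, Fintype.sum_prod_type, Fin.sum_univ_succ,
      Prod.ext_iff, Matrix.kroneckerMap_apply]

lemma w_vecMul_A (a b : ℂ) : wVec a b ᵥ* (sigmaY ⊗ₖ sigmaY) = wVec b a := by
  ext ⟨i, j⟩
  fin_cases i <;> fin_cases j <;>
    simp [vecMul, dotProduct, wVec, sigmaY, Fintype.sum_prod_type, Fin.sum_univ_succ,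
      Prod.ext_iff, Matrix.kroneckerMap_apply]

lemma A_mulVec_c (g : ℂ) : (sigmaY ⊗ₖ sigmaY) *ᵥ cVec g = dVec (-g) := by
  ext ⟨i, j⟩
  fin_cases i <;> fin_cases j <;>
    simp [mulVec, dotProduct, cVec, dVec, sigmaY, Fintype.sum_prod_type, Fin.sum_univ_succ,
      Prod.ext_iff, Matrix.kroneckerMap_apply, Complex.I_mul_I]

lemma c_vecMul_A (g : ℂ) : cVec g ᵥ* (sigmaY ⊗ₖ sigmaY) = dVec (-g) := by
  ext ⟨i, j⟩
  fin_cases i <;> fin_cases j <;>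
    simp [vecMul, dotProduct, cVec, dVec, sigmaY, Fintype.sum_prod_type, Fin.sum_univ_succ,
      Prod.ext_iff, Matrix.kroneckerMap_apply, Complex.I_mul_I]

lemma spinFlip_Wmat (a b g : ℂ) :
    spinFlip (Wmat a b g) =
      outer (wVec ((starRingEnd ℂ) b) ((starRingEnd ℂ) a)) + outer (dVec ((starRingEnd ℂ) g)) := by
  have hmapw : (outer (wVec a b)).map (starRingEnd ℂ)
      = vecMulVec (wVec ((starRingEnd ℂ) a) ((starRingEnd ℂ) b)) (wVec a b) := by
    rw [outer, map_vmv, star_star, star_wVec]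
  have hmapc : (outer (cVec g)).map (starRingEnd ℂ)
      = vecMulVec (cVec ((starRingEnd ℂ) g)) (cVec g) := by
    rw [outer, map_vmv, star_star, star_cVec]
  rw [spinFlip, Wmat, Matrix.map_add (starRingEnd ℂ) (fun x y => by simp) _ _, hmapw, hmapc, Matrix.mul_add, Matrix.add_mul]
  congr 1
  · rw [mul_vmv, vmv_mul, A_mulVec_w, w_vecMul_A, outer, star_wVec]
    simp
  · rw [mul_vmv, vmv_mul, A_mulVec_c, c_vecMul_A, dVec_neg (g := (starRingEnd ℂ) g),
      dVec_neg, vmv_neg_neg, outer, star_dVec]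
    simp

end CKWAux
namespace CKWAux
open Matrix Complex

lemma dotp_w_w (x y c d : ℂ) : wVec x y ⬝ᵥ wVec c d = x * c + y * d := by
  simp [dotProduct, wVec, Fintype.sum_prod_type, Fin.sum_univ_succ, Prod.ext_iff]
  ring

lemma dotp_w_c (x y gg : ℂ) : wVec x y ⬝ᵥ cVec gg = 0 := by
  simp [dotProduct, wVec, cVec, Fintype.sum_prod_type, Fin.sum_univ_succ, Prod.ext_iff]

lemma wVec_zero : wVec 0 0 = 0 := by
  ext p
  simp [wVec]

lemma cVec_zero : cVec 0 = 0 := by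
  ext p
  simp [cVec]

lemma outer_zero : outer (0 : Fin 2 × Fin 2 → ℂ) = 0 := by
  ext p q
  simp [outer, vecMulVec_apply]

lemma trace_outer_w (a b : ℂ) :
    (outer (wVec a b)).trace = ((normSq a + normSq b : ℝ) : ℂ) := by
  simp [Matrix.trace, Matrix.diag, outer, vecMulVec_apply, wVec, Fintype.sum_prod_type,
    Fin.sum_univ_succ, Prod.ext_iff, Complex.mul_conj]
  ring

/-- `sVal` is `1/‖(α,β)‖`. -/
def sVal (a b : ℂ) : ℝ := (Real.sqrt (normSq a + normSq b))⁻¹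

/-- eigenvalue scale of `Rmat`. -/
def tVal (a b : ℂ) : ℝ := 2 * Real.sqrt (normSq a * normSq b)

/-- scalar of the `Rmat` formula. -/
def scalVal (a b : ℂ) : ℝ := sVal a b * sVal a b * tVal a b

/-- the square root of `Wmat`. -/
def Smat (a b g : ℂ) : TwoQubitMat :=
  (‖g‖)⁻¹ • outer (cVec g) + sVal a b • outer (wVec a b)

/-- the `Rmat` of `Wmat`. -/
def Rw (a b : ℂ) : TwoQubitMat := scalVal a b • outer (wVec a b)

lemma tVal_nonneg (a b : ℂ) : 0 ≤ tVal a b := by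
  have := Real.sqrt_nonneg (normSq a * normSq b)
  rw [tVal]; linarith

lemma sVal_nonneg (a b : ℂ) : 0 ≤ sVal a b := inv_nonneg.mpr (Real.sqrt_nonneg _)

lemma scalVal_nonneg (a b : ℂ) : 0 ≤ scalVal a b :=
  mul_nonneg (mul_nonneg (sVal_nonneg a b) (sVal_nonneg a b)) (tVal_nonneg a b)

lemma Smat_posSemidef (a b g : ℂ) : (Smat a b g).PosSemidef :=
  (posSemidef_smul (outer_posSemidef _) (inv_nonneg.mpr (norm_nonneg g))).add
    (posSemidef_smul (outer_posSemidef _) (sVal_nonneg a b))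

lemma Rw_posSemidef (a b : ℂ) : (Rw a b).PosSemidef :=
  posSemidef_smul (outer_posSemidef _) (scalVal_nonneg a b)

lemma c_scal (g : ℂ) :
    ((‖g‖)⁻¹ * (‖g‖)⁻¹ * normSq g) • outer (cVec g) = outer (cVec g) := by
  by_cases hg : g = 0
  · subst hg
    rw [cVec_zero, outer_zero, smul_zero]
  · have habs : ‖g‖ ≠ 0 := norm_ne_zero_iff.mpr hg
    have : (‖g‖)⁻¹ * (‖g‖)⁻¹ * normSq g = 1 := by
      rw [← Complex.sq_norm]
      field_simp
    rw [this, one_smul]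

lemma w_scal_key (a b : ℂ) (r : ℝ)
    (hr : (normSq a + normSq b) ≠ 0 → r = 1) :
    r • outer (wVec a b) = outer (wVec a b) := by
  by_cases h : normSq a + normSq b = 0
  · have ha : normSq a = 0 := by nlinarith [Complex.normSq_nonneg a, Complex.normSq_nonneg b]
    have hb : normSq b = 0 := by nlinarith [Complex.normSq_nonneg a, Complex.normSq_nonneg b]
    rw [Complex.normSq_eq_zero] at ha hb
    subst ha; subst hb
    rw [wVec_zero, outer_zero]
    simp
  · rw [hr h, one_smul]

lemma sVal_sq (a b : ℂ) (h : normSq a + normSq b ≠ 0) :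
    sVal a b * sVal a b * (normSq a + normSq b) = 1 := by
  have h0 : 0 ≤ normSq a + normSq b := add_nonneg (Complex.normSq_nonneg a) (Complex.normSq_nonneg b)
  rw [sVal, ← mul_inv, Real.mul_self_sqrt h0]
  field_simp

lemma Smat_sq (a b g : ℂ) : Smat a b g * Smat a b g = Wmat a b g := by
  have hcc : outer (cVec g) * outer (cVec g) = (normSq g : ℝ) • outer (cVec g) := by
    rw [outer, vmv_mul_vmv, ← outer, dot_c_c, ← Complex.normSq_eq_conj_mul_self, real_smul_mat]
  have hcw : outer (cVec g) * outer (wVec a b) = 0 := by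
    rw [outer, outer, vmv_mul_vmv, dot_c_w, zero_smul]
  have hwc : outer (wVec a b) * outer (cVec g) = 0 := by
    rw [outer, outer, vmv_mul_vmv, dot_w_c, zero_smul]
  have hww : outer (wVec a b) * outer (wVec a b)
      = ((normSq a + normSq b : ℝ)) • outer (wVec a b) := by
    rw [outer, vmv_mul_vmv, ← outer, dot_w_w]
    rw [show ((starRingEnd ℂ) a * a + (starRingEnd ℂ) b * b) = ((normSq a + normSq b : ℝ) : ℂ) by
      push_cast
      rw [Complex.normSq_eq_conj_mul_self, Complex.normSq_eq_conj_mul_self]]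
    rw [real_smul_mat]
  rw [Smat, add_mul, mul_add, mul_add, smul_mul_assoc, smul_mul_assoc, smul_mul_assoc,
    smul_mul_assoc, mul_smul_comm, mul_smul_comm, mul_smul_comm, mul_smul_comm,
    hcc, hcw, hwc, hww]
  simp only [smul_zero, add_zero, zero_add, smul_smul]
  rw [Wmat]
  rw [show (‖g‖)⁻¹ * ((‖g‖)⁻¹ * normSq g) =
    (‖g‖)⁻¹ * (‖g‖)⁻¹ * normSq g by ring]
  rw [c_scal]
  rw [w_scal_key a b _ (fun h => by
    rw [show sVal a b * (sVal a b * (normSq a + normSq b)) =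
      sVal a b * sVal a b * (normSq a + normSq b) by ring]
    exact sVal_sq a b h)]
  exact add_comm _ _

end CKWAux
namespace CKWAux
open Matrix Complex

lemma real_smul_mat' {m : Type*} [Fintype m] [DecidableEq m] (r : ℝ) (M : Matrix m m ℂ) : r • M = ((r:ℂ)) • M :=
  (real_smul_mat r M).symm

lemma outer_w_mul_outer_w (a b : ℂ) : outer (wVec a b) * outer (wVec a b)
    = ((normSq a + normSq b : ℝ)) • outer (wVec a b) := by
  rw [outer, vmv_mul_vmv, ← outer, dot_w_w]
  rw [show ((starRingEnd ℂ) a * a + (starRingEnd ℂ) b * b) = ((normSq a + normSq b : ℝ) : ℂ) by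
    push_cast
    rw [Complex.normSq_eq_conj_mul_self, Complex.normSq_eq_conj_mul_self]]
  rw [real_smul_mat]

lemma M_eq (a b g : ℂ) :
    Smat a b g * spinFlip (Wmat a b g) * Smat a b g
      = (sVal a b * sVal a b * (4 * (normSq a * normSq b))) • outer (wVec a b) := by
  rw [spinFlip_Wmat]
  have h1 : outer (cVec g) * outer (wVec ((starRingEnd ℂ) b) ((starRingEnd ℂ) a)) = 0 := by
    rw [outer, outer, vmv_mul_vmv, dot_c_w, zero_smul]
  have h2 : outer (cVec g) * outer (dVec ((starRingEnd ℂ) g)) = 0 := by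
    rw [outer, outer, vmv_mul_vmv, dot_c_d, zero_smul]
  have h3 : outer (wVec a b) * outer (dVec ((starRingEnd ℂ) g)) = 0 := by
    rw [outer, outer, vmv_mul_vmv, dot_w_d, zero_smul]
  have h4 : outer (wVec a b) * outer (wVec ((starRingEnd ℂ) b) ((starRingEnd ℂ) a))
      = ((starRingEnd ℂ) a * (starRingEnd ℂ) b + (starRingEnd ℂ) b * (starRingEnd ℂ) a) •
          vecMulVec (wVec a b) (wVec b a) := by
    rw [outer, outer, vmv_mul_vmv, dot_w_w, star_wVec]
    simp
  have h5 : vecMulVec (wVec a b) (wVec b a) * outer (cVec g) = 0 := by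
    rw [outer, vmv_mul_vmv, dotp_w_c, zero_smul]
  have h6 : vecMulVec (wVec a b) (wVec b a) * outer (wVec a b)
      = (b * a + a * b) • outer (wVec a b) := by
    rw [outer, vmv_mul_vmv, ← outer, dotp_w_w]
  rw [Smat]
  simp only [real_smul_mat', add_mul, mul_add, smul_mul_assoc, mul_smul_comm,
    h1, h2, h3, h4, h5, h6, smul_zero, zero_add, add_zero, smul_smul]
  congr 1
  push_cast
  rw [Complex.normSq_eq_conj_mul_self, Complex.normSq_eq_conj_mul_self]
  ring

lemma scal_identity (a b : ℂ) :
    scalVal a b * scalVal a b * (normSq a + normSq b)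
      = sVal a b * sVal a b * (4 * (normSq a * normSq b)) := by
  by_cases h : normSq a + normSq b = 0
  · have ha : normSq a = 0 := by nlinarith [Complex.normSq_nonneg a, Complex.normSq_nonneg b]
    simp [scalVal, tVal, ha, h]
  · have h1 := sVal_sq a b h
    have hp := Real.mul_self_sqrt (mul_nonneg (Complex.normSq_nonneg a) (Complex.normSq_nonneg b))
    rw [scalVal, tVal]
    linear_combination (4 * sVal a b * sVal a b *
        (Real.sqrt (normSq a * normSq b) * Real.sqrt (normSq a * normSq b))) * h1 +
      (4 * sVal a b * sVal a b) * hp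

lemma scal_mul_n2 (a b : ℂ) :
    scalVal a b * (normSq a + normSq b) = tVal a b := by
  by_cases h : normSq a + normSq b = 0
  · have ha : normSq a = 0 := by nlinarith [Complex.normSq_nonneg a, Complex.normSq_nonneg b]
    simp [scalVal, tVal, ha, h]
  · have h1 := sVal_sq a b h
    rw [scalVal, tVal]
    linear_combination (2 * Real.sqrt (normSq a * normSq b)) * h1

lemma Rw_sq (a b g : ℂ) :
    Rw a b * Rw a b = Smat a b g * spinFlip (Wmat a b g) * Smat a b g := by
  rw [M_eq, Rw, smul_mul_assoc, mul_smul_comm, outer_w_mul_outer_w, smul_smul, smul_smul,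
    ← scal_identity]

lemma Rmat_Wmat (a b g : ℂ) : Rmat (Wmat a b g) = Rw a b := by
  rw [Rmat, matSqrt_eq (Smat_posSemidef a b g) (Smat_sq a b g)]
  exact matSqrt_eq (Rw_posSemidef a b) (Rw_sq a b g)

lemma trace_Rw (a b : ℂ) : (Rw a b).trace.re = tVal a b := by
  rw [Rw, Matrix.trace_smul, trace_outer_w, ← scal_mul_n2]
  simp [Complex.real_smul]
  ring

lemma Rw_sq_smul (a b : ℂ) : Rw a b * Rw a b = tVal a b • Rw a b := by
  rw [Rw, smul_mul_assoc, mul_smul_comm, outer_w_mul_outer_w, smul_smul, smul_smul, smul_smul,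
    ← scal_mul_n2]
  ring_nf

lemma maxEig_Rw (a b : ℂ) : maxEig4 (Rw a b) = tVal a b :=
  maxEig4_eq (Rw_posSemidef a b) (tVal a b) (trace_Rw a b) (Rw_sq_smul a b)

lemma tVal_eq (a b : ℂ) : tVal a b = 2 * ‖a‖ * ‖b‖ := by
  rw [tVal, Real.sqrt_mul (Complex.normSq_nonneg a), ← Complex.norm_def, ← Complex.norm_def]
  ring

lemma conc_coa (a b g : ℂ) :
    Conc (Wmat a b g) = 2 * ‖a‖ * ‖b‖ ∧
    CoA (Wmat a b g) = 2 * ‖a‖ * ‖b‖ := by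
  constructor
  · rw [Conc, Rmat_Wmat a b g, maxEig_Rw, trace_Rw,
      show 2 * tVal a b - tVal a b = tVal a b by ring, max_eq_right (tVal_nonneg a b), tVal_eq]
  · rw [CoA, Rmat_Wmat a b g, trace_Rw, tVal_eq]

end CKWAux
theorem CKW_and_dual_saturated_for_W_class (α₁ α₂ α₃ : ℂ)
    (h : Complex.normSq α₁ + Complex.normSq α₂ + Complex.normSq α₃ = 1) :
    Conc (rhoAB (psiW3 α₁ α₂ α₃)) = 2 * ‖α₁‖ * ‖α₂‖ ∧
    CoA (rhoAB (psiW3 α₁ α₂ α₃)) = 2 * ‖α₁‖ * ‖α₂‖ ∧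
    Conc (rhoAS (psiW3 α₁ α₂ α₃)) = 2 * ‖α₁‖ * ‖α₃‖ ∧
    CoA (rhoAS (psiW3 α₁ α₂ α₃)) = 2 * ‖α₁‖ * ‖α₃‖ ∧
    4 * (rhoA (psiW3 α₁ α₂ α₃)).det.re =
      4 * ‖α₁‖ ^ 2 * (‖α₂‖ ^ 2 + ‖α₃‖ ^ 2) ∧
    Conc (rhoAB (psiW3 α₁ α₂ α₃)) ^ 2 + Conc (rhoAS (psiW3 α₁ α₂ α₃)) ^ 2 =
      4 * (rhoA (psiW3 α₁ α₂ α₃)).det.re ∧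
    CoA (rhoAB (psiW3 α₁ α₂ α₃)) ^ 2 + CoA (rhoAS (psiW3 α₁ α₂ α₃)) ^ 2 =
      4 * (rhoA (psiW3 α₁ α₂ α₃)).det.re := by
  obtain ⟨hc1, ha1⟩ := CKWAux.conc_coa α₁ α₂ α₃
  obtain ⟨hc2, ha2⟩ := CKWAux.conc_coa α₁ α₃ α₂
  rw [CKWAux.rhoAB_eq, CKWAux.rhoAS_eq]
  have hdet : (rhoA (psiW3 α₁ α₂ α₃)).det.re = (normSq α₂ + normSq α₃) * normSq α₁ := by
    have hd : (rhoA (psiW3 α₁ α₂ α₃)).det = (((normSq α₂ + normSq α₃) * normSq α₁ : ℝ) : ℂ) := by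
      rw [Matrix.det_fin_two]
      simp [rhoA, psiW3, Fin.sum_univ_succ]
      rw [Complex.normSq_eq_conj_mul_self, Complex.normSq_eq_conj_mul_self,
        Complex.normSq_eq_conj_mul_self]
      ring
    rw [hd, Complex.ofReal_re]
  refine ⟨hc1, ha1, hc2, ha2, ?_, ?_, ?_⟩
  · rw [hdet, ← Complex.sq_norm α₁, ← Complex.sq_norm α₂, ← Complex.sq_norm α₃]
    ring
  · rw [hc1, hc2, hdet, ← Complex.sq_norm α₁, ← Complex.sq_norm α₂, ← Complex.sq_norm α₃]
    ring
  · rw [ha1, ha2, hdet, ← Complex.sq_norm α₁, ← Complex.sq_norm α₂, ← Complex.sq_norm α₃]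
    ring
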